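/- arXiv:1909.00543 — 3 statements merged into one kernel-verified Lean document; each statement's English description precedes it below -/
import Mathlib

section
/- For any (ε,δ)-differentially private mechanism M mapping {0,1} to {0,1}, the quantity (Pr[M(1)=1] + Pr[M(0)=0])/2 is at most 1 - (1-δ)/(e^ε + 1). -/
/-- For any (ε,δ)-DP mechanism `M : {0,1} → {0,1}` (given by its transition
probabilities `p x z = Pr[M(x) = z]`), the quantity
`(Pr[M(1)=1] + Pr[M(0)=0]) / 2` is at most `1 - (1-δ)/(e^ε + 1)`. -/
theorem dp_auc_bound (ε δ : ℝ) (hε : 0 ≤ ε) (hδ0 : 0 ≤ δ) (hδ1 : δ ≤ 1)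
    (p : Bool → Bool → ℝ)
    (hnn : ∀ x z, 0 ≤ p x z)
    (hsum : ∀ x, p x true + p x false = 1)
    (hDP : ∀ z x x', x ≠ x' → p x z ≤ Real.exp ε * p x' z + δ) :
    (p true true + p false false) / 2 ≤ 1 - (1 - δ) / (Real.exp ε + 1) := by
  have h1 := hDP true true false (by simp)
  have h2 := hDP false false true (by simp)
  have hs1 := hsum true
  have hs2 := hsum false
  have hE : (0:ℝ) < Real.exp ε := Real.exp_pos ε
  have key : (1 + Real.exp ε) * (p true true + p false false) ≤ 2 * (Real.exp ε + δ) := by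
    nlinarith
  have hq : (1 - δ) / (Real.exp ε + 1) * (Real.exp ε + 1) = 1 - δ :=
    div_mul_cancel₀ _ (by linarith)
  nlinarith [key, hq, hE]
end

section
/- In the DAG activation recursion, for a fixed target node t and fixed node v, the map α_v ↦ x_t is affine (linear plus constant) when all other α_u (u ≠ v) are held fixed; its slope equals (∂x_t/∂x_v)·(1 − Σ_{u ∈ N_in(v)} w(u,v)·x_u), where ∂x_t/∂x_v satisfies the backward recursion ∂x_t/∂x_v = Σ_{u ∈ N_out(v)} w(v,u)·(1 − α_u)·(∂x_t/∂x_u) with base case ∂x_t/∂x_t = 1. -/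
/-- Affine dependence of `x t` on a single seed probability `α v`.  Let
`X : (V → ℝ) → V → ℝ` solve the activation recursion for every seed vector.
If `d : V → ℝ` satisfies the backward recursion `d t = 1` and
`d v' = Σ_u w v' u · (1 − α u) · d u` for `v' ≠ t`, then for every new value
`s` of the seed at `v`,
`X (update α v s) t = X α t + d v · (1 − Σ_u w u v · X α u) · (s − α v)`;
i.e. `α_v ↦ x_t` is affine with slope `(∂x_t/∂x_v)·(1 − Σ_u w u v · x_u)`. -/
theorem dag_activation_affine_in_seed
    {V : Type*} [Fintype V] [DecidableEq V] (w : V → V → ℝ) (r : V → ℕ)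
    (hacyc : ∀ u v, w u v ≠ 0 → r u < r v)
    (hw0 : ∀ u v, 0 ≤ w u v) (hw1 : ∀ u v, w u v ≤ 1)
    (hin : ∀ v, ∑ u, w u v ≤ 1)
    (X : (V → ℝ) → V → ℝ)
    (hX : ∀ (β : V → ℝ) (v : V),
      X β v = β v + (1 - β v) * ∑ u, w u v * X β u)
    (α : V → ℝ) (hα0 : ∀ v, 0 ≤ α v) (hα1 : ∀ v, α v ≤ 1)
    (t v : V) (d : V → ℝ)
    (hdt : d t = 1)
    (hd : ∀ v' : V, v' ≠ t → d v' = ∑ u, w v' u * (1 - α u) * d u) :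
    ∀ s : ℝ,
      X (Function.update α v s) t =
        X α t + d v * (1 - ∑ u, w u v * X α u) * (s - α v) := by
  intro s
  set β := Function.update α v s with hβ
  -- Nodes of rank below `r v` are unaffected by the update.
  have hlow : ∀ n, ∀ u : V, r u < n → r u < r v → X β u = X α u := by
    intro n
    induction n with
    | zero => intro u h _; omega
    | succ n ih =>
      intro u hu huv
      have hne : u ≠ v := fun h => by rw [h] at huv; omega
      have hβu : β u = α u := by
        rw [hβ]; exact Function.update_of_ne hne s α
      rw [hX β u, hX α u, hβu]
      congr 2
      apply Finset.sum_congr rfl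
      intro u' _
      by_cases h0 : w u' u = 0
      · simp [h0]
      · have := hacyc u' u h0
        rw [ih u' (by omega) (by omega)]
  have hlow' : ∀ u : V, r u < r v → X β u = X α u := fun u h => hlow (r u + 1) u (by omega) h
  set Δ : ℝ := (1 - ∑ u, w u v * X α u) * (s - α v) with hΔ
  set δ : V → ℝ := fun u => X β u - X α u with hδ
  have hinzero : ∀ u, w u v * δ u = 0 := by
    intro u
    by_cases h0 : w u v = 0
    · simp [h0]
    · have h := hlow' u (hacyc u v h0)
      simp [hδ, h]
  have hδv : δ v = Δ := by
    have h1 : X β v = s + (1 - s) * ∑ u, w u v * X α u := by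
      rw [hX β v]
      have hβv : β v = s := by rw [hβ]; exact Function.update_self v s α
      rw [hβv]
      congr 2
      apply Finset.sum_congr rfl
      intro u _
      by_cases h0 : w u v = 0
      · simp [h0]
      · rw [hlow' u (hacyc u v h0)]
    have h2 := hX α v
    simp only [hδ]
    rw [h1, h2, hΔ]; ring
  have hδforward : ∀ u : V, u ≠ v → δ u = (1 - α u) * ∑ u', w u' u * δ u' := by
    intro u hu
    have hβu : β u = α u := by rw [hβ]; exact Function.update_of_ne hu s α
    have hsum : ∑ u', w u' u * δ u'
        = (∑ u', w u' u * X β u') - (∑ u', w u' u * X α u') := by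
      rw [← Finset.sum_sub_distrib]
      exact Finset.sum_congr rfl (fun u' _ => by simp only [hδ]; ring)
    simp only [hδ]
    rw [hX β u, hX α u, hβu, hsum]; ring
  -- d vanishes on nodes of rank above r t
  set N := Finset.univ.sup r with hN
  have hrN : ∀ u : V, r u ≤ N := fun u => Finset.le_sup (Finset.mem_univ u)
  have hdhigh : ∀ n, ∀ u : V, N + 1 ≤ r u + n → r t < r u → d u = 0 := by
    intro n
    induction n with
    | zero => intro u h _; have := hrN u; omega
    | succ n ih =>
      intro u h hru
      have hut : u ≠ t := by rintro rfl; omega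
      rw [hd u hut]
      apply Finset.sum_eq_zero
      intro u' _
      by_cases h0 : w u u' = 0
      · simp [h0]
      · have := hacyc u u' h0
        rw [ih u' (by omega) (by omega)]; ring
  have hdz : ∀ u : V, r t < r u → d u = 0 := fun u h => hdhigh (N + 1) u (by omega) h
  -- adjoint sum
  have hS1 : (∑ u, d u * (δ u - (1 - α u) * ∑ u', w u' u * δ u')) = d v * Δ := by
    rw [Finset.sum_eq_single v]
    · have hz : (∑ u', w u' v * δ u') = 0 := Finset.sum_eq_zero (fun u _ => hinzero u)
      rw [hz, hδv]; ring
    · intro u _ hu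
      rw [hδforward u hu]; ring
    · intro h; exact absurd (Finset.mem_univ v) h
  have hS2 : (∑ u, d u * (δ u - (1 - α u) * ∑ u', w u' u * δ u')) = δ t := by
    have step1 : ∀ u : V, d u * (δ u - (1 - α u) * ∑ u', w u' u * δ u')
        = d u * δ u - ∑ u', (w u' u * (1 - α u) * d u) * δ u' := by
      intro u
      rw [mul_sub]
      congr 1
      rw [Finset.mul_sum, Finset.mul_sum]
      exact Finset.sum_congr rfl (fun u' _ => by ring)
    simp only [step1]
    rw [Finset.sum_sub_distrib, Finset.sum_comm]
    have hinner : ∀ u' : V, (∑ u, (w u' u * (1 - α u) * d u) * δ u')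
        = d u' * δ u' - (if u' = t then δ t else 0) := by
      intro u'
      by_cases hu't : u' = t
      · subst hu't
        have hz : (∑ u, (w u' u * (1 - α u) * d u) * δ u') = 0 := by
          apply Finset.sum_eq_zero
          intro u _
          by_cases h0 : w u' u = 0
          · simp [h0]
          · rw [hdz u (hacyc u' u h0)]; ring
        rw [hz]; simp [hdt]
      · rw [← Finset.sum_mul, ← hd u' hu't]
        simp [hu't]
    simp only [hinner]
    rw [Finset.sum_sub_distrib, Finset.sum_ite_eq' Finset.univ t (fun _ => δ t)]
    simp
  have hkey : δ t = d v * Δ := hS2.symm.trans hS1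
  have hΔ' : d v * Δ = d v * (1 - ∑ u, w u v * X α u) * (s - α v) := by rw [hΔ]; ring
  have hδt : δ t = X β t - X α t := rfl
  rw [hδt, hΔ'] at hkey
  linarith
end

section
/- Let R₁ and R₀ be independent random scores, where R₁ is drawn by first sampling z = M(1) and then a score s ~ S_z, and R₀ by sampling z' = M(0) and s' ~ S_{z'}, for arbitrary score distributions S_0, S_1 on the reals. Then Pr[s > s'] + (1/2)·Pr[s = s'] = (p11·p00 − p01·p10)·(γ(1,0) − γ(0,1))/2 + 1/2, where γ(a,b) = Pr[s > s' | s ~ S_a, s' ~ S_b], pxz = Pr[M(x)=z]. -/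
open MeasureTheory

lemma tri (μ ν : Measure ℝ) [IsProbabilityMeasure μ] [IsProbabilityMeasure ν] :
    ((μ.prod ν) {q : ℝ × ℝ | q.2 < q.1}).toReal +
    ((ν.prod μ) {q : ℝ × ℝ | q.2 < q.1}).toReal +
    ((μ.prod ν) {q : ℝ × ℝ | q.1 = q.2}).toReal = 1 := by
  have hA : MeasurableSet {q : ℝ × ℝ | q.2 < q.1} :=
    measurableSet_lt measurable_snd measurable_fst
  have hB : MeasurableSet {q : ℝ × ℝ | q.1 < q.2} :=
    measurableSet_lt measurable_fst measurable_snd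
  have hC : MeasurableSet {q : ℝ × ℝ | q.1 = q.2} :=
    measurableSet_eq_fun measurable_fst measurable_snd
  have hswap : (ν.prod μ) {q : ℝ × ℝ | q.2 < q.1} =
      (μ.prod ν) {q : ℝ × ℝ | q.1 < q.2} := by
    rw [← (Measure.measurePreserving_swap (μ := μ) (ν := ν)).measure_preimage hA.nullMeasurableSet]
    rfl
  have hd1 : Disjoint {q : ℝ × ℝ | q.1 < q.2} {q : ℝ × ℝ | q.1 = q.2} := by
    rw [Set.disjoint_left]; intro q h1 h2; exact absurd h2 (ne_of_lt h1)
  have hd2 : Disjoint {q : ℝ × ℝ | q.2 < q.1}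
      ({q : ℝ × ℝ | q.1 < q.2} ∪ {q : ℝ × ℝ | q.1 = q.2}) := by
    rw [Set.disjoint_left]; intro q h1 h2
    simp only [Set.mem_union, Set.mem_setOf_eq] at h1 h2
    rcases h2 with h2 | h2
    · exact lt_asymm h1 h2
    · exact absurd h2 (ne_of_gt h1)
  have hunion : {q : ℝ × ℝ | q.2 < q.1} ∪
      ({q : ℝ × ℝ | q.1 < q.2} ∪ {q : ℝ × ℝ | q.1 = q.2}) = Set.univ := by
    ext q
    simp only [Set.mem_union, Set.mem_setOf_eq, Set.mem_univ, iff_true]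
    rcases lt_trichotomy q.1 q.2 with h | h | h
    · exact Or.inr (Or.inl h)
    · exact Or.inr (Or.inr h)
    · exact Or.inl h
  have h1 : (μ.prod ν) {q : ℝ × ℝ | q.2 < q.1} +
      ((μ.prod ν) {q : ℝ × ℝ | q.1 < q.2} + (μ.prod ν) {q : ℝ × ℝ | q.1 = q.2}) = 1 := by
    rw [← measure_union hd1 hC, ← measure_union hd2 (hB.union hC), hunion, measure_univ]
  rw [hswap]
  have := congrArg ENNReal.toReal h1
  rwa [ENNReal.toReal_add (measure_ne_top _ _) (by exact ENNReal.add_ne_top.mpr ⟨measure_ne_top _ _, measure_ne_top _ _⟩),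
    ENNReal.toReal_add (measure_ne_top _ _) (measure_ne_top _ _), ENNReal.toReal_one, ← add_assoc] at this

/-- AUC of a scoring classifier: a positive sample's score is drawn from
`S (M 1)` and a negative sample's from `S (M 0)`, where `S b = μ b` is the
score distribution for observed report `b` and `p x z = Pr[M(x)=z]`.  Then
`Pr[s > s'] + ½·Pr[s = s']`
`= (p11·p00 − p01·p10)·(γ(1,0) − γ(0,1))/2 + 1/2`,
where `γ(a,b)` is the probability that a sample from `μ a` strictly exceeds an
independent sample from `μ b`. -/
theorem auc_scoring_formula
    (p : Bool → Bool → ℝ)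
    (hnn : ∀ x z, 0 ≤ p x z)
    (hsum : ∀ x, p x true + p x false = 1)
    (μ : Bool → Measure ℝ) (hP : ∀ b, IsProbabilityMeasure (μ b)) :
    (∑ z : Bool, ∑ z' : Bool, p true z * p false z' *
        (((μ z).prod (μ z')) {q : ℝ × ℝ | q.2 < q.1}).toReal) +
      (1 / 2) * (∑ z : Bool, ∑ z' : Bool, p true z * p false z' *
        (((μ z).prod (μ z')) {q : ℝ × ℝ | q.1 = q.2}).toReal) =
    (p true true * p false false - p false true * p true false) *
        ((((μ true).prod (μ false)) {q : ℝ × ℝ | q.2 < q.1}).toReal -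
          (((μ false).prod (μ true)) {q : ℝ × ℝ | q.2 < q.1}).toReal) / 2
      + 1 / 2 := by
  have hPt := hP true; have hPf := hP false
  have h1 := tri (μ true) (μ false)
  have h2 := tri (μ false) (μ true)
  have h3 := tri (μ true) (μ true)
  have h4 := tri (μ false) (μ false)
  have h5 := hsum true; have h6 := hsum false
  simp only [Fintype.sum_bool]
  linear_combination (p true true * p false true / 2) * h3 +
    (p true false * p false false / 2) * h4 +
    (p true true * p false false / 2) * h1 +
    (p true false * p false true / 2) * h2 +
    ((p false true + p false false) / 2) * h5 + (1 / 2) * h6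
end
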